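/- Let V be a subspace of 𝔽_q[x₁,…,x_m] with property (*) (monomial basis indexed by I containing the zero tuple and, for each coordinate j, a tuple k_j·e_j with gcd(k_j,q−1)=1). For α ∈ 𝔽_q^m let V_α = {f ∈ V : f(α) = 0}. Then for distinct α, β ∈ 𝔽_q^m, every additive character χ of V that is trivial on both V_α and V_β is the trivial character; equivalently V_α^⊥ ∩ V_β^⊥ = {χ₀}. -/

import Mathlib

lemma pow_inj_of_gcd {F : Type} [Field F] [Fintype F] {k : ℕ} (hk : 0 < k)
    (h : Nat.gcd k (Fintype.card F - 1) = 1) {a b : F} (hab : a ^ k = b ^ k) : a = b := by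
  classical
  rcases eq_or_ne a 0 with rfl | ha
  · rcases eq_or_ne b 0 with rfl | hb
    · rfl
    · exfalso; apply hb; have := hab.symm
      rw [zero_pow hk.ne'] at this
      exact pow_eq_zero_iff hk.ne' |>.mp this
  · rcases eq_or_ne b 0 with rfl | hb
    · exfalso; apply ha
      rw [zero_pow hk.ne'] at hab
      exact pow_eq_zero_iff hk.ne' |>.mp hab
    · have hco : (Nat.card Fˣ).Coprime k := by
        rw [Nat.card_eq_fintype_card, Fintype.card_units, Nat.Coprime, Nat.gcd_comm]
        exact h
      have key : (powCoprime hco) (Units.mk0 a ha) = (powCoprime hco) (Units.mk0 b hb) := by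
        ext; simpa [powCoprime] using hab
      have := (powCoprime hco).injective key
      simpa using congrArg Units.val this

/-- For a subspace `V` with property (*) and distinct `α, β ∈ 𝔽_q^m`, any additive character
of `V` that is trivial on both `V_α` and `V_β` is the trivial character:
`V_α^⊥ ∩ V_β^⊥ = {χ₀}`. -/
theorem stmt9 {m : ℕ} {F : Type} [Field F] [Fintype F]
    (V : Submodule F (MvPolynomial (Fin m) F)) (I : Finset (Fin m →₀ ℕ))
    (hV : V = Submodule.span F ((fun d => MvPolynomial.monomial d (1 : F)) '' I))
    (h0 : (0 : Fin m →₀ ℕ) ∈ I)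
    (hpure : ∀ j : Fin m, ∃ k : ℕ, 0 < k ∧ Nat.gcd k (Fintype.card F - 1) = 1 ∧
      Finsupp.single j k ∈ I)
    (α β : Fin m → F) (hαβ : α ≠ β)
    (χ : AddChar V ℂ)
    (hα : ∀ f : V, MvPolynomial.eval α (f : MvPolynomial (Fin m) F) = 0 → χ f = 1)
    (hβ : ∀ f : V, MvPolynomial.eval β (f : MvPolynomial (Fin m) F) = 0 → χ f = 1) :
    χ = 1 := by
  classical
  -- find a coordinate where α and β differ
  obtain ⟨j, hj⟩ : ∃ j, α j ≠ β j := Function.ne_iff.mp hαβ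
  obtain ⟨k, hk0, hkgcd, hkI⟩ := hpure j
  -- the monomial x_j^k lies in V
  have hmem : ∀ d ∈ I, (MvPolynomial.monomial d (1 : F)) ∈ V := by
    intro d hd
    rw [hV]
    exact Submodule.subset_span ⟨d, hd, rfl⟩
  set g : V := ⟨MvPolynomial.monomial (Finsupp.single j k) (1 : F), hmem _ hkI⟩ with hg
  set one : V := ⟨MvPolynomial.monomial 0 (1 : F), hmem _ h0⟩ with hone
  have evalg : ∀ γ : Fin m → F, MvPolynomial.eval γ (g : MvPolynomial (Fin m) F) = γ j ^ k := by
    intro γ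
    simp [hg, MvPolynomial.eval_monomial, Finsupp.prod_single_index]
  have evalone : ∀ γ : Fin m → F,
      MvPolynomial.eval γ (one : MvPolynomial (Fin m) F) = 1 := by
    intro γ; simp [hone]
  have hD : MvPolynomial.eval α (g : MvPolynomial (Fin m) F)
      - MvPolynomial.eval β (g : MvPolynomial (Fin m) F) ≠ 0 := by
    rw [evalg, evalg, sub_ne_zero]
    intro h
    exact hj (pow_inj_of_gcd hk0 hkgcd h)
  set gα := MvPolynomial.eval α (g : MvPolynomial (Fin m) F)
  set gβ := MvPolynomial.eval β (g : MvPolynomial (Fin m) F)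
  ext f
  set A := MvPolynomial.eval α (f : MvPolynomial (Fin m) F) with hA
  set b : F := A / (gα - gβ) with hb
  set a : F := -(b * gβ) with ha
  set f2 : V := a • one + b • g with hf2
  have evalf2 : ∀ γ : Fin m → F, MvPolynomial.eval γ (f2 : MvPolynomial (Fin m) F)
      = a + b * MvPolynomial.eval γ (g : MvPolynomial (Fin m) F) := by
    intro γ
    simp [hf2, MvPolynomial.smul_eval, evalone γ]
  have hf2β : MvPolynomial.eval β (f2 : MvPolynomial (Fin m) F) = 0 := by
    rw [evalf2]; simp [ha]; exact neg_add_cancel (b * gβ)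
  have hf2α : MvPolynomial.eval α (f2 : MvPolynomial (Fin m) F) = A := by
    rw [evalf2, ha, hb]
    field_simp
    ring
  have hf1α : MvPolynomial.eval α ((f - f2 : V) : MvPolynomial (Fin m) F) = 0 := by
    push_cast
    rw [map_sub, hf2α, hA, sub_self]
  have h1 : χ (f - f2) = 1 := hα _ hf1α
  have h2 : χ f2 = 1 := hβ _ hf2β
  have : χ f = χ (f - f2) * χ f2 := by
    rw [← AddChar.map_add_eq_mul, sub_add_cancel]
  simp [this, h1, h2]
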